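/- Let R' be a commutative ring, P a unit of R', M an R'-module, ι a finite index type, and (u_i)_{i ∈ ι} a family of pairwise commuting R'-linear endomorphisms of M each satisfying u_i^3 + P*u_i = 0. For each subset s ⊆ ι set V(s) = (⋂_{i ∈ s} ker(u_i)) ∩ (⋂_{i ∉ s} range(u_i)). Then M is the internal direct sum of the submodules V(s) as s ranges over all subsets of ι. -/

import Mathlib

open scoped Classical

section Stmt2Aux

variable {ι : Type*}

private lemma stmt2_prod_factor [DecidableEq ι] {β : Type*} [Monoid β]
    (S : Finset ι) (g : ι → β) (hg : ∀ a b, Commute (g a) (g b)) {i : ι} (hi : i ∈ S) :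
    S.noncommProd g (fun a _ b _ _ => hg a b) =
      g i * (S.erase i).noncommProd g (fun a _ b _ _ => hg a b) :=
  (Finset.mul_noncommProd_erase S hi g (fun a _ b _ _ => hg a b)
    (fun a _ b _ _ => hg a b)).symm

private lemma stmt2_prod_fix {R M : Type*} [CommRing R] [AddCommGroup M] [Module R M]
    (S : Finset ι) (g : ι → Module.End R M) (hg : ∀ a b, Commute (g a) (g b)) (x : M)
    (hx : ∀ i ∈ S, g i x = x) :
    S.noncommProd g (fun a _ b _ _ => hg a b) x = x := by
  classical
  induction S using Finset.induction_on with
  | empty => rfl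
  | @insert a s ha ih =>
    rw [show (insert a s).noncommProd g (fun a _ b _ _ => hg a b) = g a * s.noncommProd g (fun a _ b _ _ => hg a b) from
      Finset.noncommProd_insert_of_notMem _ _ _ _ ha, Module.End.mul_apply]
    have h1 : Finset.noncommProd s g (fun a _ b _ _ => hg a b) x = x :=
      ih (fun i hi => hx i (Finset.mem_insert_of_mem hi))
    rw [show Finset.noncommProd s g _ x = x from h1]
    exact hx a (Finset.mem_insert_self a s)

private lemma stmt2_comm_ite {β : Type*} [Ring β] (A B : ι → β)
    (hAA : ∀ i j, Commute (A i) (A j)) (hAB : ∀ i j, Commute (A i) (B j))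
    (hBB : ∀ i j, Commute (B i) (B j)) (p q : Prop) [Decidable p] [Decidable q] (i j : ι) :
    Commute (if p then A i else B i) (if q then A j else B j) := by
  split_ifs
  · exact hAA i j
  · exact hAB i j
  · exact (hAB j i).symm
  · exact hBB i j

private lemma stmt2_pairwise [DecidableEq ι] {β : Type*} [Ring β]
    (A B : ι → β) (hAA : ∀ i j, Commute (A i) (A j)) (hAB : ∀ i j, Commute (A i) (B j))
    (hBB : ∀ i j, Commute (B i) (B j)) (s T : Finset ι) :
    (↑T : Set ι).Pairwise fun a b =>
      Commute ((fun i => if i ∈ s then A i else B i) a)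
        ((fun i => if i ∈ s then A i else B i) b) :=
  fun a _ b _ _ => stmt2_comm_ite A B hAA hAB hBB _ _ a b

private lemma stmt2_sum_aux [DecidableEq ι] {β : Type*} [Ring β]
    (A B : ι → β) (hAA : ∀ i j, Commute (A i) (A j)) (hAB : ∀ i j, Commute (A i) (B j))
    (hBB : ∀ i j, Commute (B i) (B j)) (h1 : ∀ i, A i + B i = 1) (T : Finset ι) :
    ∑ s ∈ T.powerset, T.noncommProd (fun i => if i ∈ s then A i else B i)
      (stmt2_pairwise A B hAA hAB hBB s T) = 1 := by
  induction T using Finset.induction_on with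
  | empty => simp
  | @insert a T ha ih =>
    have hdisj : Disjoint T.powerset (T.powerset.image (insert a)) := by
      rw [Finset.disjoint_left]
      intro s hs hs'
      obtain ⟨s', _, rfl⟩ := Finset.mem_image.1 hs'
      exact ha (Finset.mem_powerset.1 hs (Finset.mem_insert_self a s'))
    have hinj : ∀ s ∈ T.powerset, ∀ s' ∈ T.powerset, insert a s = insert a s' → s = s' := by
      intro s hs s' hs' h
      have has : a ∉ s := fun h' => ha (Finset.mem_powerset.1 hs h')
      have has' : a ∉ s' := fun h' => ha (Finset.mem_powerset.1 hs' h')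
      rw [← Finset.erase_insert has, h, Finset.erase_insert has']
    rw [Finset.powerset_insert, Finset.sum_union hdisj, Finset.sum_image hinj]
    have key : ∀ s ∈ T.powerset,
        (insert a T).noncommProd (fun i => if i ∈ s then A i else B i)
            (stmt2_pairwise A B hAA hAB hBB s (insert a T))
          + (insert a T).noncommProd (fun i => if i ∈ insert a s then A i else B i)
            (stmt2_pairwise A B hAA hAB hBB (insert a s) (insert a T))
        = T.noncommProd (fun i => if i ∈ s then A i else B i)
            (stmt2_pairwise A B hAA hAB hBB s T) := by
      intro s hs
      have has : a ∉ s := fun h' => ha (Finset.mem_powerset.1 hs h')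
      rw [Finset.noncommProd_insert_of_notMem _ _ _ _ ha,
        Finset.noncommProd_insert_of_notMem _ _ _ _ ha]
      have e1 : (if a ∈ s then A a else B a) = B a := if_neg has
      have e2 : (if a ∈ insert a s then A a else B a) = A a := if_pos (Finset.mem_insert_self a s)
      have e3 : T.noncommProd (fun i => if i ∈ insert a s then A i else B i)
            (stmt2_pairwise A B hAA hAB hBB (insert a s) T)
          = T.noncommProd (fun i => if i ∈ s then A i else B i)
            (stmt2_pairwise A B hAA hAB hBB s T) := by
        have h2 : ∀ i ∈ T, (fun i => if i ∈ insert a s then A i else B i) i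
            = (fun i => if i ∈ s then A i else B i) i := by
          intro i hi
          have hia : i ≠ a := fun h => ha (h ▸ hi)
          simp [Finset.mem_insert, hia]
        exact Finset.noncommProd_congr rfl h2 _
      rw [e1, e2]
      rw [show T.noncommProd (fun i => if i ∈ insert a s then A i else B i)
            ((stmt2_pairwise A B hAA hAB hBB (insert a s) (insert a T)).mono
              fun _ => Finset.mem_insert_of_mem)
          = T.noncommProd (fun i => if i ∈ s then A i else B i)
            (stmt2_pairwise A B hAA hAB hBB s T) from e3]
      rw [show T.noncommProd (fun i => if i ∈ s then A i else B i)
            ((stmt2_pairwise A B hAA hAB hBB s (insert a T)).mono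
              fun _ => Finset.mem_insert_of_mem)
          = T.noncommProd (fun i => if i ∈ s then A i else B i)
            (stmt2_pairwise A B hAA hAB hBB s T) from rfl]
      rw [← add_mul, add_comm (B a), h1 a, one_mul]
    rw [← Finset.sum_add_distrib, Finset.sum_congr rfl key]
    exact ih

end Stmt2Aux

open scoped Classical in
/-- For a finite family of pairwise commuting endomorphisms `u i`
of an `R'`-module `M` each satisfying `u_i^3 + P•u_i = 0` with `P` a unit,
the module `M` is the internal direct sum of the submodules
`V(s) = (⋂_{i ∈ s} ker (u i)) ⊓ (⋂_{i ∉ s} range (u i))` over all subsets `s`. -/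
theorem stmt2 {R M : Type*} [CommRing R] [AddCommGroup M] [Module R M]
    {ι : Type*} [Fintype ι] (P : R) (hP : IsUnit P) (u : ι → M →ₗ[R] M)
    (hcomm : ∀ i j, u i ∘ₗ u j = u j ∘ₗ u i)
    (hu : ∀ i, u i ∘ₗ u i ∘ₗ u i + P • u i = 0) :
    DirectSum.IsInternal (fun s : Set ι =>
      (⨅ i ∈ s, LinearMap.ker (u i)) ⊓ (⨅ i ∈ sᶜ, LinearMap.range (u i))) := by
  classical
  set V : Set ι → Submodule R M := fun s =>
    (⨅ i ∈ s, LinearMap.ker (u i)) ⊓ (⨅ i ∈ sᶜ, LinearMap.range (u i)) with hVdef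
  set Q : R := ↑hP.unit⁻¹ with hQdef
  have hQP : Q * P = 1 := hP.val_inv_mul
  have hcu : ∀ i j, Commute (u i) (u j) := hcomm
  have hu3 : ∀ i, u i * (u i * u i) = -(P • u i) := fun i => eq_neg_of_add_eq_zero_left (hu i)
  set e : ι → Module.End R M := fun i => -(Q • (u i * u i)) with hedef
  have hue : ∀ i, u i * e i = u i := by
    intro i
    show u i * -(Q • (u i * u i)) = u i
    rw [mul_neg, mul_smul_comm, hu3 i, smul_neg, neg_neg, smul_smul, hQP, one_smul]
  have heu : ∀ i, e i * u i = u i := by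
    intro i
    show -(Q • (u i * u i)) * u i = u i
    rw [neg_mul, smul_mul_assoc, mul_assoc, hu3 i, smul_neg, neg_neg, smul_smul, hQP, one_smul]
  have hsmulc : ∀ (r : R) (a b : Module.End R M), Commute a b → Commute (r • a) b := by
    intro r a b h
    unfold Commute SemiconjBy
    rw [smul_mul_assoc, h.eq, mul_smul_comm]
  have hcue : ∀ i j, Commute (u i) (e j) := by
    intro i j
    have h : Commute (u i) (u j * u j) := (hcu i j).mul_right (hcu i j)
    exact ((hsmulc Q _ _ h.symm).symm).neg_right
  have hce : ∀ i j, Commute (e i) (e j) := by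
    intro i j
    have h : Commute (u i * u i) (e j) := (hcue i j).mul_left (hcue i j)
    exact (hsmulc Q _ _ h).neg_left
  set f : Set ι → ι → Module.End R M := fun s i => if i ∈ s then 1 - e i else e i with hfdef
  have hcf : ∀ (s : Set ι) (i j : ι), Commute (f s i) (f s j) := by
    intro s i j
    exact stmt2_comm_ite (fun i => 1 - e i) e
      (fun i j => ((Commute.one_right _).sub_right ((Commute.one_left _).sub_left (hce i j))))
      (fun i j => (Commute.one_left _).sub_left (hce i j))
      hce _ _ i j
  set π : Set ι → Module.End R M := fun s =>
    Finset.univ.noncommProd (f s) (fun a _ b _ _ => hcf s a b) with hπdef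
  have hπ : ∀ s : Set ι, π s = Finset.univ.noncommProd (f s) (fun a _ b _ _ => hcf s a b) :=
    fun s => rfl
  -- membership criterion for V
  have hVmem : ∀ (s : Set ι) (x : M),
      x ∈ V s ↔ (∀ i ∈ s, u i x = 0) ∧ (∀ i, i ∉ s → x ∈ LinearMap.range (u i)) := by
    intro s x
    simp [hVdef, Submodule.mem_inf, Submodule.mem_iInf, LinearMap.mem_ker, Set.mem_compl_iff]
  have hek : ∀ (i : ι) (x : M), u i x = 0 → e i x = 0 := by
    intro i x hx
    show (-(Q • (u i * u i))) x = 0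
    simp [Module.End.mul_apply, hx]
  have her : ∀ (i : ι) (x : M), x ∈ LinearMap.range (u i) → e i x = x := by
    rintro i x ⟨y, rfl⟩
    calc e i (u i y) = (e i * u i) y := rfl
    _ = u i y := by rw [heu]
  -- π s x belongs to V s
  have hmem : ∀ (s : Set ι) (x : M), π s x ∈ V s := by
    intro s x
    rw [hVmem]
    constructor
    · intro i hi
      have hfac := stmt2_prod_factor Finset.univ (f s) (hcf s) (Finset.mem_univ i)
      rw [hπ s, hfac, Module.End.mul_apply]
      have hfi : f s i = 1 - e i := if_pos hi
      rw [hfi]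
      have h0 : u i * (1 - e i) = 0 := by rw [mul_sub, mul_one, hue, sub_self]
      calc u i ((1 - e i) (((Finset.univ.erase i).noncommProd (f s)
              (fun a _ b _ _ => hcf s a b)) x))
          = (u i * (1 - e i)) (((Finset.univ.erase i).noncommProd (f s)
              (fun a _ b _ _ => hcf s a b)) x) := rfl
        _ = 0 := by rw [h0]; rfl
    · intro i hi
      have hfac := stmt2_prod_factor Finset.univ (f s) (hcf s) (Finset.mem_univ i)
      rw [hπ s, hfac, Module.End.mul_apply]
      have hfi : f s i = e i := if_neg hi
      rw [hfi]
      set y := ((Finset.univ.erase i).noncommProd (f s) (fun a _ b _ _ => hcf s a b)) x with hy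
      refine ⟨-(Q • u i y), ?_⟩
      show u i (-(Q • u i y)) = (-(Q • (u i * u i))) y
      simp [Module.End.mul_apply]
  -- π t fixes V t
  have hfix : ∀ (t : Set ι) (x : M), x ∈ V t → π t x = x := by
    intro t x hx
    rw [hVmem] at hx
    rw [hπ t]
    refine stmt2_prod_fix Finset.univ (f t) (hcf t) x fun i _ => ?_
    by_cases hi : i ∈ t
    · have h1 : f t i = 1 - e i := if_pos hi
      rw [h1, LinearMap.sub_apply, Module.End.one_apply, hek i x (hx.1 i hi), sub_zero]
    · have h1 : f t i = e i := if_neg hi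
      rw [h1, her i x (hx.2 i hi)]
  -- π t kills V s for s ≠ t
  have hkill : ∀ (s t : Set ι), s ≠ t → ∀ x ∈ V s, π t x = 0 := by
    intro s t hst x hx
    rw [hVmem] at hx
    have hex : ∃ i, ¬(i ∈ s ↔ i ∈ t) := by
      by_contra h
      push_neg at h
      exact hst (Set.ext h)
    obtain ⟨i, hi⟩ := hex
    have hfac := stmt2_prod_factor Finset.univ (f t) (hcf t) (Finset.mem_univ i)
    have hcomr : Commute (f t i)
        ((Finset.univ.erase i).noncommProd (f t) (fun a _ b _ _ => hcf t a b)) :=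
      Finset.noncommProd_commute _ _ _ _ (fun j _ => hcf t i j)
    have hswap : Finset.univ.noncommProd (f t) (fun a _ b _ _ => hcf t a b) = ((Finset.univ.erase i).noncommProd (f t)
        (fun a _ b _ _ => hcf t a b)) * f t i := hfac.trans hcomr.eq
    rw [hπ t, hswap, Module.End.mul_apply]
    have hfx : f t i x = 0 := by
      by_cases hit : i ∈ t
      · have his : i ∉ s := fun his => hi (iff_of_true his hit)
        have h1 : f t i = 1 - e i := if_pos hit
        rw [h1, LinearMap.sub_apply, Module.End.one_apply, her i x (hx.2 i his), sub_self]
      · have his : i ∈ s := by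
          by_contra h'
          exact hi (iff_of_false h' hit)
        have h1 : f t i = e i := if_neg hit
        rw [h1, hek i x (hx.1 i his)]
    rw [hfx, map_zero]
  -- sum of the projections is 1
  have hπs : ∀ s : Finset ι,
      Finset.univ.noncommProd (fun i => if i ∈ s then (fun i => 1 - e i) i else e i)
        (stmt2_pairwise (fun i => 1 - e i) e
          (fun i j => ((Commute.one_right _).sub_right ((Commute.one_left _).sub_left (hce i j))))
          (fun i j => (Commute.one_left _).sub_left (hce i j)) hce s Finset.univ)
      = π ↑s := by
    intro s
    rw [hπ ↑s]
    have h2 : ∀ i ∈ (Finset.univ : Finset ι),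
        (fun i => if i ∈ s then (fun i => 1 - e i) i else e i) i = f ↑s i := by
      intro i _
      show (if i ∈ s then 1 - e i else e i) = f ↑s i
      by_cases hi : i ∈ s
      · rw [if_pos hi]
        exact (if_pos (Finset.mem_coe.2 hi)).symm
      · rw [if_neg hi]
        exact (if_neg (fun h => hi (Finset.mem_coe.1 h))).symm
    exact Finset.noncommProd_congr rfl h2 _
  have hsum : ∑ s ∈ (Finset.univ : Finset ι).powerset, π ↑s = 1 := by
    rw [← stmt2_sum_aux (fun i => 1 - e i) e
      (fun i j => ((Commute.one_right _).sub_right ((Commute.one_left _).sub_left (hce i j))))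
      (fun i j => (Commute.one_left _).sub_left (hce i j))
      hce (fun i => sub_add_cancel 1 (e i)) Finset.univ]
    exact Finset.sum_congr rfl fun s _ => (hπs s).symm
  -- spanning
  have htop : ⨆ s, V s = ⊤ := by
    rw [eq_top_iff]
    rintro x -
    have hx : (∑ s ∈ (Finset.univ : Finset ι).powerset, π ↑s x) = x := by
      rw [← LinearMap.sum_apply, hsum]; rfl
    rw [← hx]
    exact Submodule.sum_mem _ fun s _ => Submodule.mem_iSup_of_mem (↑s) (hmem (↑s) x)
  -- independence
  have hind : iSupIndep V := by
    intro t
    rw [Submodule.disjoint_def]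
    intro x hxt hxo
    have h2 : (⨆ s, ⨆ (_ : s ≠ t), V s) ≤ LinearMap.ker (π t) :=
      iSup₂_le fun s hs => fun y hy => LinearMap.mem_ker.2 (hkill s t hs y hy)
    have h3 : π t x = 0 := h2 hxo
    calc x = π t x := (hfix t x hxt).symm
    _ = 0 := h3
  exact DirectSum.isInternal_submodule_of_iSupIndep_of_iSup_eq_top hind htop
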